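/- Let k ≥ 1, let Z ⊆ {1,…,k} with |Z| = r ≥ 1, and let a = (a_1,…,a_k) be a k-tuple of positive integers such that a_i ≡ 1 (mod 2^{⌊log₂(2i)⌋}) for every i ∈ Z and a_i ≡ 0 (mod 2^{⌊log₂(2i)⌋}) for every i ∉ Z. Then: (i) Φ(a, I) is even for every I ∈ {0,1}^k with ε_1 + ⋯ + ε_k < r; and (ii) Φ(a, χ_Z) is odd, where χ_Z ∈ {0,1}^k is the indicator vector of Z (entry 1 in positions belonging to Z and 0 elsewhere). -/

import Mathlib

/-- `Phi k a I` is the sum `Σ_B ∏_{i=1}^k C(a_i + b_i - 2, b_i)` over all `k`-tuples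
`B = (b_1,…,b_k)` of nonnegative integers such that `B + I ∈ 𝒮_k` (i.e. the sum of the
first `j` entries of `B + I` is at most `j` for each `1 ≤ j ≤ k`) and
`(b_1+ε_1) + ⋯ + (b_k+ε_k) = k`.  Sequences are 1-indexed: the `i`-th entry of `a` is
`a i` for `1 ≤ i ≤ k`.  The top entry `a_i + b_i - 2` uses truncated subtraction. -/
def Phi (k : ℕ) (a I : ℕ → ℕ) : ℕ :=
  ∑ B ∈ (Fintype.piFinset fun _ : Fin k => Finset.range (k + 1)) |>.filter
      (fun B =>
        (∀ j : Fin k,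
          (∑ i ∈ Finset.univ.filter (fun i : Fin k => i ≤ j), (B i + I (i.1 + 1)))
            ≤ j.1 + 1) ∧
        (∑ i : Fin k, (B i + I (i.1 + 1))) = k),
    ∏ i : Fin k, Nat.choose (a (i.1 + 1) + B i - 2) (B i)

/-- If some binary digit of `b` below position `m` exceeds the corresponding digit of `n`
(expressed as `n % 2^m < b` with `b < 2^m`), then `C(n,b)` is even. -/
lemma even_choose_aux : ∀ m n b : ℕ, b < 2 ^ m → n % 2 ^ m < b → Even (n.choose b) := by
  intro m
  induction m with
  | zero =>
    intro n b hb hnb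
    simp only [pow_zero] at hb hnb
    omega
  | succ m ih =>
    intro n b hb hnb
    have h2 : Nat.choose n b ≡ Nat.choose (n % 2) (b % 2) * Nat.choose (n / 2) (b / 2) [MOD 2] :=
      Choose.choose_modEq_choose_mod_mul_choose_div_nat (p := 2)
    rw [Nat.even_iff]
    rw [Nat.ModEq] at h2
    rw [h2, ← Nat.even_iff]
    by_cases hcase : n % 2 < b % 2
    · have h0 : n % 2 = 0 ∧ b % 2 = 1 := by omega
      rw [h0.1, h0.2]
      simp
    · have hA : n % (2 * 2 ^ m) / 2 = n / 2 % 2 ^ m := Nat.mod_mul_right_div_self n 2 (2 ^ m)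
      have hpow : (2:ℕ) ^ (m + 1) = 2 * 2 ^ m := by ring
      rw [hpow] at hnb hb
      have hB : n % (2 * 2 ^ m) % 2 = n % 2 :=
        Nat.mod_mod_of_dvd n ⟨2 ^ m, rfl⟩
      have h1 : b / 2 < 2 ^ m := by omega
      have h2' : n / 2 % 2 ^ m < b / 2 := by omega
      exact (ih (n / 2) (b / 2) h1 h2').mul_left _

lemma log_facts (v : ℕ) (hv : 1 ≤ v) :
    v < 2 ^ Nat.log 2 (2 * v) ∧ 1 ≤ Nat.log 2 (2 * v) := by
  constructor
  · have h := Nat.lt_pow_succ_log_self (by norm_num : 1 < 2) (2 * v)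
    rw [Nat.succ_eq_add_one, pow_succ] at h
    omega
  · have h : (2:ℕ) ^ 1 ≤ 2 * v := by omega
    exact (Nat.le_log_iff_pow_le (by norm_num) (by omega)).mpr h

/-- The case `i ∈ Z`: if `a ≡ 1 (mod 2^{lg(2v)})` and `1 ≤ b ≤ v` then `C(a+b-2,b)` is even. -/
lemma evenZ (v a b : ℕ) (hv : 1 ≤ v) (hb1 : 1 ≤ b) (hbv : b ≤ v)
    (haZ : a ≡ 1 [MOD 2 ^ Nat.log 2 (2 * v)]) : Even ((a + b - 2).choose b) := by
  obtain ⟨hvlt, hm1⟩ := log_facts v hv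
  set t := 2 ^ Nat.log 2 (2 * v) with ht
  have ht2 : 2 ≤ t := by
    calc (2:ℕ) = 2 ^ 1 := rfl
    _ ≤ t := Nat.pow_le_pow_right (by norm_num) hm1
  have hamod : a % t = 1 := by
    have h := haZ
    rw [Nat.ModEq] at h
    rw [h, Nat.mod_eq_of_lt (by omega)]
  have hdm : t * (a / t) + a % t = a := Nat.div_add_mod a t
  have hn : a + b - 2 = t * (a / t) + (b - 1) := by omega
  apply even_choose_aux (Nat.log 2 (2 * v)) _ _ (by omega : b < 2 ^ Nat.log 2 (2 * v))
  rw [← ht, hn, Nat.mul_add_mod, Nat.mod_eq_of_lt (by omega)]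
  omega

/-- The case `i ∉ Z`: if `a ≡ 0 (mod 2^{lg(2v)})` and `2 ≤ b ≤ v` then `C(a+b-2,b)` is even. -/
lemma evenC (v a b : ℕ) (hv : 1 ≤ v) (hb2 : 2 ≤ b) (hbv : b ≤ v)
    (haC : a ≡ 0 [MOD 2 ^ Nat.log 2 (2 * v)]) : Even ((a + b - 2).choose b) := by
  obtain ⟨hvlt, hm1⟩ := log_facts v hv
  set t := 2 ^ Nat.log 2 (2 * v) with ht
  have ht2 : 2 ≤ t := by
    calc (2:ℕ) = 2 ^ 1 := rfl
    _ ≤ t := Nat.pow_le_pow_right (by norm_num) hm1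
  have hamod : a % t = 0 := by
    have h := haC
    rw [Nat.ModEq] at h
    rw [h, Nat.zero_mod]
  have hdm : t * (a / t) + a % t = a := Nat.div_add_mod a t
  have hn : a + b - 2 = t * (a / t) + (b - 2) := by omega
  apply even_choose_aux (Nat.log 2 (2 * v)) _ _ (by omega : b < 2 ^ Nat.log 2 (2 * v))
  rw [← ht, hn, Nat.mul_add_mod, Nat.mod_eq_of_lt (by omega)]
  omega

/-- `a` is even when `a ≡ 0 (mod 2^{lg(2v)})` with `v ≥ 1`. -/
lemma evenA (v a : ℕ) (hv : 1 ≤ v)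
    (haC : a ≡ 0 [MOD 2 ^ Nat.log 2 (2 * v)]) : 2 ∣ a := by
  obtain ⟨-, hm1⟩ := log_facts v hv
  have h1 : (2:ℕ) ∣ 2 ^ Nat.log 2 (2 * v) := dvd_pow_self 2 (by omega)
  have h2 : 2 ^ Nat.log 2 (2 * v) ∣ a := (Nat.modEq_zero_iff_dvd).mp haC
  exact h1.trans h2

lemma sum_fin_icc (k : ℕ) (f : ℕ → ℕ) :
    ∑ i : Fin k, f (i.1 + 1) = ∑ j ∈ Finset.Icc 1 k, f j := by
  rw [Fin.sum_univ_eq_sum_range (fun i => f (i + 1))]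
  rw [show Finset.Icc 1 k = Finset.Ico 1 (k + 1) by rw [Finset.Ico_add_one_right_eq_Icc]]
  rw [Finset.sum_Ico_eq_sum_range]
  simp only [Nat.add_sub_cancel]
  exact Finset.sum_congr rfl (fun i _ => by rw [Nat.add_comm])

/-- Theorem 4.6 (thm01): if `a_i ≡ 1 (mod 2^{⌊log₂(2i)⌋})` for `i ∈ Z` and
`a_i ≡ 0 (mod 2^{⌊log₂(2i)⌋})` for `i ∉ Z`, where `|Z| = r ≥ 1`, then `Φ(a, I)` is
even for every 0/1-vector `I` with fewer than `r` ones, while `Φ(a, χ_Z)` is odd. -/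
theorem stmt_12 (k r : ℕ) (hk : 1 ≤ k) (hr : 1 ≤ r)
    (Z : Finset ℕ) (hZU : Z ⊆ Finset.Icc 1 k) (hZcard : Z.card = r)
    (a : ℕ → ℕ) (ha : ∀ i ∈ Finset.Icc 1 k, 0 < a i)
    (haZ : ∀ i ∈ Finset.Icc 1 k, i ∈ Z → a i ≡ 1 [MOD 2 ^ Nat.log 2 (2 * i)])
    (haC : ∀ i ∈ Finset.Icc 1 k, i ∉ Z → a i ≡ 0 [MOD 2 ^ Nat.log 2 (2 * i)]) :
    (∀ I : ℕ → ℕ, (∀ i ∈ Finset.Icc 1 k, I i ≤ 1) →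
      (∑ i ∈ Finset.Icc 1 k, I i) < r → Even (Phi k a I)) ∧
    Odd (Phi k a (fun i => if i ∈ Z then 1 else 0)) := by
  -- notation
  set F : (Fin k → ℕ) → ℕ :=
    fun B => ∏ i : Fin k, Nat.choose (a (i.1 + 1) + B i - 2) (B i) with hF
  have hmem : ∀ i : Fin k, i.1 + 1 ∈ Finset.Icc 1 k := by
    intro i
    simp only [Finset.mem_Icc]
    omega
  -- the sum of the Z-indicator over Fin k is r
  have hchi : ∑ i : Fin k, (if i.1 + 1 ∈ Z then (1:ℕ) else 0) = r := by
    rw [sum_fin_icc k (fun j => if j ∈ Z then 1 else 0)]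
    rw [Finset.sum_boole]
    rw [Finset.filter_mem_eq_inter, Finset.inter_eq_right.mpr hZU]
    simpa using hZcard
  have hchi' : ∑ i : Fin k, (if i.1 + 1 ∈ Z then (0:ℕ) else 1) = k - r := by
    have htot : ∑ i : Fin k, ((if i.1 + 1 ∈ Z then (0:ℕ) else 1)
        + (if i.1 + 1 ∈ Z then (1:ℕ) else 0)) = k := by
      have : ∀ i : Fin k, (if i.1 + 1 ∈ Z then (0:ℕ) else 1)
          + (if i.1 + 1 ∈ Z then (1:ℕ) else 0) = 1 := by
        intro i; split <;> rfl
      simp only [this, Finset.sum_const, Finset.card_univ, Fintype.card_fin, smul_eq_mul, mul_one]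
    rw [Finset.sum_add_distrib, hchi] at htot
    have hrk : r ≤ k := by
      have := Finset.card_le_card hZU
      simpa [hZcard, Nat.card_Icc] using this
    omega
  have hrk : r ≤ k := by
    have h := Finset.card_le_card hZU
    simpa [hZcard, Nat.card_Icc] using h
  -- key dichotomy for a tuple B in the index set of `Phi k a I`
  have hkey : ∀ (I : ℕ → ℕ) (B : Fin k → ℕ),
      (∀ j : Fin k,
        (∑ i ∈ Finset.univ.filter (fun i : Fin k => i ≤ j), (B i + I (i.1 + 1))) ≤ j.1 + 1) →
      (∀ i : Fin k, B i ≤ (if i.1 + 1 ∈ Z then 0 else 1)) ∨ Even (F B) := by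
    intro I B hpart
    by_cases hall : ∀ i : Fin k, B i ≤ (if i.1 + 1 ∈ Z then 0 else 1)
    · exact Or.inl hall
    · right
      push_neg at hall
      obtain ⟨i, hi⟩ := hall
      have hBle : B i ≤ i.1 + 1 := by
        have h1 := hpart i
        have h2 : B i + I (i.1 + 1) ≤
            ∑ i' ∈ Finset.univ.filter (fun i' : Fin k => i' ≤ i), (B i' + I (i'.1 + 1)) := by
          apply Finset.single_le_sum (f := fun i' : Fin k => B i' + I (i'.1 + 1))
            (fun _ _ => Nat.zero_le _)
          simp
        omega
      have heven : Even (Nat.choose (a (i.1 + 1) + B i - 2) (B i)) := by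
        by_cases hiZ : i.1 + 1 ∈ Z
        · rw [if_pos hiZ] at hi
          exact evenZ (i.1 + 1) _ (B i) (by omega) (by omega) hBle (haZ _ (hmem i) hiZ)
        · rw [if_neg hiZ] at hi
          exact evenC (i.1 + 1) _ (B i) (by omega) (by omega) hBle (haC _ (hmem i) hiZ)
      have hdvd : (2:ℕ) ∣ F B := by
        refine dvd_trans ?_ (Finset.dvd_prod_of_mem _ (Finset.mem_univ i))
        obtain ⟨c, hc⟩ := heven
        exact ⟨c, by omega⟩
      obtain ⟨d, hd⟩ := hdvd
      exact ⟨d, by omega⟩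
  constructor
  · -- part (i)
    intro I hI01 hIsum
    have hIfin : ∑ i : Fin k, I (i.1 + 1) < r := by
      rw [sum_fin_icc k I]; exact hIsum
    unfold Phi
    apply Finset.even_sum
    intro B hB
    rw [Finset.mem_filter] at hB
    obtain ⟨hBpi, hBpart, hBsum⟩ := hB
    rcases hkey I B hBpart with hcond | heven
    · exfalso
      have h1 : ∑ i : Fin k, (B i + I (i.1 + 1))
          = (∑ i : Fin k, B i) + ∑ i : Fin k, I (i.1 + 1) := Finset.sum_add_distrib
      have h2 : (∑ i : Fin k, B i) ≤ ∑ i : Fin k, (if i.1 + 1 ∈ Z then (0:ℕ) else 1) :=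
        Finset.sum_le_sum (fun i _ => hcond i)
      rw [hchi'] at h2
      rw [h1] at hBsum
      omega
    · exact heven
  · -- part (ii)
    set I : ℕ → ℕ := fun i => if i ∈ Z then 1 else 0 with hIdef
    set B₀ : Fin k → ℕ := fun i => if i.1 + 1 ∈ Z then 0 else 1 with hB₀def
    have hterm : ∀ i : Fin k, B₀ i + I (i.1 + 1) = 1 := by
      intro i
      simp only [hB₀def, hIdef]
      split <;> simp_all
    have hB₀mem : B₀ ∈ ((Fintype.piFinset fun _ : Fin k => Finset.range (k + 1)).filter
        (fun B =>
          (∀ j : Fin k,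
            (∑ i ∈ Finset.univ.filter (fun i : Fin k => i ≤ j), (B i + I (i.1 + 1)))
              ≤ j.1 + 1) ∧
          (∑ i : Fin k, (B i + I (i.1 + 1))) = k)) := by
      rw [Finset.mem_filter]
      refine ⟨?_, ?_, ?_⟩
      · rw [Fintype.mem_piFinset]
        intro i
        rw [Finset.mem_range]
        simp only [hB₀def]
        split <;> omega
      · intro j
        have h1 : ∑ i ∈ Finset.univ.filter (fun i : Fin k => i ≤ j), (B₀ i + I (i.1 + 1))
            = (Finset.univ.filter (fun i : Fin k => i ≤ j)).card := by
          rw [Finset.card_eq_sum_ones]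
          exact Finset.sum_congr rfl (fun i _ => hterm i)
        have h2 : Finset.univ.filter (fun i : Fin k => i ≤ j) = Finset.Iic j := by
          ext i; simp
        rw [h1, h2, Fin.card_Iic]
      · have h1 : ∑ i : Fin k, (B₀ i + I (i.1 + 1)) = ∑ _i : Fin k, 1 :=
          Finset.sum_congr rfl (fun i _ => hterm i)
        simp [h1]
    unfold Phi
    rw [← Finset.add_sum_erase _ _ hB₀mem]
    apply Odd.add_even
    · -- the product at B₀ is odd
      rw [Nat.odd_iff, Finset.prod_nat_mod]
      have hfac : ∀ i : Fin k,
          Nat.choose (a (i.1 + 1) + B₀ i - 2) (B₀ i) % 2 = 1 := by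
        intro i
        by_cases hiZ : i.1 + 1 ∈ Z
        · have : B₀ i = 0 := by simp [hB₀def, hiZ]
          rw [this]
          simp
        · have hB1 : B₀ i = 1 := by simp [hB₀def, hiZ]
          have harw : a (i.1 + 1) + 1 - 2 = a (i.1 + 1) - 1 := by omega
          rw [hB1, harw, Nat.choose_one_right]
          have h2a : 2 ∣ a (i.1 + 1) := evenA (i.1 + 1) _ (by omega) (haC _ (hmem i) hiZ)
          have hpos : 0 < a (i.1 + 1) := ha _ (hmem i)
          omega
      rw [Finset.prod_congr rfl (fun i _ => hfac i)]
      simp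
    · -- the remaining terms are all even
      apply Finset.even_sum
      intro B hB
      have hBne : B ≠ B₀ := Finset.ne_of_mem_erase hB
      have hB' := Finset.mem_of_mem_erase hB
      rw [Finset.mem_filter] at hB'
      obtain ⟨hBpi, hBpart, hBsum⟩ := hB'
      rcases hkey I B hBpart with hcond | heven
      · exfalso
        apply hBne
        -- each coordinate of B + I is ≤ 1; since the total is k, all are = 1
        have hle1 : ∀ i : Fin k, B i + I (i.1 + 1) ≤ 1 := by
          intro i
          have := hcond i
          simp only [hIdef]
          by_cases hiZ : i.1 + 1 ∈ Z <;> simp_all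
        have hall1 : ∀ i : Fin k, B i + I (i.1 + 1) = 1 := by
          by_contra hcon
          push_neg at hcon
          obtain ⟨i₀, hi₀⟩ := hcon
          have hlt : ∑ i : Fin k, (B i + I (i.1 + 1)) < ∑ _i : Fin k, 1 := by
            apply Finset.sum_lt_sum (fun i _ => hle1 i)
            have h := hle1 i₀
            exact ⟨i₀, Finset.mem_univ i₀, by omega⟩
          simp only [Finset.sum_const, Finset.card_univ, Fintype.card_fin, smul_eq_mul,
            mul_one] at hlt
          omega
        funext i
        have h1 := hall1 i
        simp only [hIdef, hB₀def] at h1 ⊢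
        by_cases hiZ : i.1 + 1 ∈ Z <;> simp_all
      · exact heven
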